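/- For every ε ∈ (0,1) there exists a constant C > 0, depending only on ε, such that for all θ > 0, all λ ∈ ℂ and all φ ∈ (0,θ) satisfying 1 − (1−ε)π/θ ≤ Re λ ≤ (1−ε)π/θ − 1, |Im λ|·θ < 1/4, |λ−1| ≥ 1/4 and |λ+1| ≥ 1/4, one has |(λ+1)cos((λ+1)φ)/(4λ sin((λ+1)θ)) − (λ−1)cos((λ−1)φ)/(4λ sin((λ−1)θ))| ≤ C·θ. -/

import Mathlib

open Real

set_option maxHeartbeats 1000000

/-! Compatibility: the complex absolute value as an `AbsoluteValue`, equal to the norm. -/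
noncomputable def Complex.abs : AbsoluteValue ℂ ℝ where
  toFun z := ‖z‖
  map_mul' := norm_mul
  nonneg' := norm_nonneg
  eq_zero' _ := norm_eq_zero
  add_le' := norm_add_le

@[simp] lemma Complex.abs_apply' (z : ℂ) : Complex.abs z = ‖z‖ := rfl
lemma Complex.norm_eq_abs (z : ℂ) : ‖z‖ = Complex.abs z := rfl
lemma Complex.abs_I : Complex.abs Complex.I = 1 := by simp
lemma Complex.abs_two : Complex.abs 2 = 2 := by simp
lemma Complex.abs_ofReal (r : ℝ) : Complex.abs (r : ℂ) = |r| := by simp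
lemma Complex.sq_abs (z : ℂ) : Complex.abs z ^ 2 = Complex.normSq z := by simp [Complex.sq_norm]
lemma Complex.abs_add_mul_I (x y : ℝ) :
    Complex.abs (x + y * Complex.I) = √(x ^ 2 + y ^ 2) := Complex.norm_add_mul_I x y
lemma Complex.abs_le_abs_re_add_abs_im (z : ℂ) : Complex.abs z ≤ |z.re| + |z.im| :=
  Complex.norm_le_abs_re_add_abs_im z
lemma Complex.abs_re_le_abs (z : ℂ) : |z.re| ≤ Complex.abs z := Complex.abs_re_le_norm z
lemma Complex.abs_im_le_abs (z : ℂ) : |z.im| ≤ Complex.abs z := Complex.abs_im_le_norm z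

/-! ### Auxiliary material: the entire extension `Tsinc` of `sin w / w` -/

/-- The analytic extension of `w ↦ sin w / w` to `ℂ`. -/
noncomputable def Tsinc : ℂ → ℂ := fun w => if w = 0 then 1 else Complex.sin w / w

/-- The derivative of `Tsinc`. -/
noncomputable def Tsinc' : ℂ → ℂ := fun w =>
  if w = 0 then 0 else (w * Complex.cos w - Complex.sin w) / w ^ 2

lemma sin_eq_mul_Tsinc (w : ℂ) : Complex.sin w = w * Tsinc w := by
  unfold Tsinc
  rcases eq_or_ne w 0 with h | h
  · simp [h]
  · rw [if_neg h]; field_simp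

lemma Tsinc_even (w : ℂ) : Tsinc (-w) = Tsinc w := by
  unfold Tsinc
  rcases eq_or_ne w 0 with h | h
  · simp [h]
  · rw [if_neg (neg_ne_zero.mpr h), if_neg h, Complex.sin_neg, neg_div_neg_eq]

lemma abs_sin_sq (z : ℂ) :
    Complex.abs (Complex.sin z) ^ 2 = Real.sin z.re ^ 2 + Real.sinh z.im ^ 2 := by
  rw [Complex.sin_eq, ← Complex.ofReal_sin, ← Complex.ofReal_cos, ← Complex.ofReal_sinh,
    ← Complex.ofReal_cosh, ← Complex.ofReal_mul, ← Complex.ofReal_mul, Complex.abs_add_mul_I,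
    Real.sq_sqrt (by positivity)]
  have h1 := Real.sin_sq_add_cos_sq z.re
  have h2 := Real.cosh_sq z.im
  nlinarith [Real.sinh_sq z.im]

lemma abs_cos_sq (z : ℂ) :
    Complex.abs (Complex.cos z) ^ 2 = Real.cos z.re ^ 2 + Real.sinh z.im ^ 2 := by
  rw [Complex.cos_eq, ← Complex.ofReal_sin, ← Complex.ofReal_cos, ← Complex.ofReal_sinh,
    ← Complex.ofReal_cosh, ← Complex.ofReal_mul, ← Complex.ofReal_mul, sub_eq_add_neg,
    ← neg_mul, ← Complex.ofReal_neg, Complex.abs_add_mul_I, Real.sq_sqrt (by positivity)]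
  have h1 := Real.sin_sq_add_cos_sq z.re
  have h2 := Real.cosh_sq z.im
  nlinarith [Real.sinh_sq z.im]

lemma exp_half_le_two : Real.exp (1/2) ≤ 2 := by
  nlinarith [Real.exp_one_lt_d9, Real.exp_pos (1/2 : ℝ),
    (by rw [← Real.exp_add]; norm_num : Real.exp (1/2) * Real.exp (1/2) = Real.exp 1)]

lemma sinh_le_two_mul (b : ℝ) (hb0 : 0 ≤ b) (hb : b ≤ 1/4) : Real.sinh b ≤ 2 * b := by
  rw [Real.sinh_eq]
  have h1 : (-(2*b)) + 1 ≤ Real.exp (-(2*b)) := Real.add_one_le_exp _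
  have h2 : Real.exp (-(2*b)) * Real.exp (2*b) = 1 := by rw [← Real.exp_add]; norm_num
  have h3 : Real.exp (2*b) ≤ 2 :=
    le_trans (Real.exp_le_exp.mpr (by linarith)) exp_half_le_two
  have h4 : Real.exp (-b) ≤ 1 := Real.exp_le_one_iff.mpr (by linarith)
  have h5 : Real.exp b = Real.exp (-b) * Real.exp (2*b) := by rw [← Real.exp_add]; ring_nf
  have h6 : 1 ≤ Real.exp (2*b) := Real.one_le_exp_iff.mpr (by linarith)
  have h7 : 0 < Real.exp (-b) := Real.exp_pos _
  have hA : (-(2*b) + 1) * Real.exp (2*b) ≤ 1 := by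
    calc (-(2*b) + 1) * Real.exp (2*b) ≤ Real.exp (-(2*b)) * Real.exp (2*b) :=
          mul_le_mul_of_nonneg_right h1 (Real.exp_pos _).le
      _ = 1 := h2
  have hB : Real.exp (2*b) - 1 ≤ 2*b * Real.exp (2*b) := by nlinarith
  have hC : 2*b * Real.exp (2*b) ≤ 2*b*2 := by nlinarith
  nlinarith [mul_nonneg (by linarith : (0:ℝ) ≤ 1 - Real.exp (-b))
    (by linarith : (0:ℝ) ≤ Real.exp (2*b) - 1)]

lemma le_sinh_self (b : ℝ) (hb0 : 0 ≤ b) : b ≤ Real.sinh b := by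
  rcases eq_or_lt_of_le hb0 with h | h
  · simp [← h]
  · exact (Real.self_lt_sinh_iff.mpr h).le

lemma sinh_sq_le {b : ℝ} (hb : |b| ≤ 1/4) : Real.sinh b ^ 2 ≤ 4 * b ^ 2 := by
  have h := sinh_le_two_mul |b| (abs_nonneg b) hb
  have h0 : 0 ≤ Real.sinh |b| := le_trans (abs_nonneg b) (le_sinh_self _ (abs_nonneg b))
  have h2 : Real.sinh b ^ 2 = Real.sinh |b| ^ 2 := by
    rcases abs_cases b with ⟨h,_⟩ | ⟨h,_⟩ <;> rw [h] <;> simp [Real.sinh_neg]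
  rw [h2]
  calc Real.sinh |b| ^ 2 ≤ (2 * |b|) ^ 2 := by nlinarith
    _ = 4 * b ^ 2 := by rw [mul_pow, sq_abs]; ring

lemma sq_le_sinh_sq (b : ℝ) : b ^ 2 ≤ Real.sinh b ^ 2 := by
  have h := le_sinh_self |b| (abs_nonneg b)
  have h2 : Real.sinh b ^ 2 = Real.sinh |b| ^ 2 := by
    rcases abs_cases b with ⟨h,_⟩ | ⟨h,_⟩ <;> rw [h] <;> simp [Real.sinh_neg]
  rw [h2]
  nlinarith [abs_nonneg b, sq_abs b]

/-- Upper bound for `|sin|` on a horizontal strip. -/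
lemma abs_sin_upper {w : ℂ} (him : |w.im| ≤ 1/4) :
    Complex.abs (Complex.sin w) ≤ 2 * Complex.abs w := by
  have h1 : Complex.abs (Complex.sin w) ^ 2 ≤ (2 * Complex.abs w) ^ 2 := by
    rw [abs_sin_sq, mul_pow, Complex.sq_abs, Complex.normSq_apply]
    have := sinh_sq_le him
    have := Real.abs_sin_le_abs (x := w.re)
    nlinarith [sq_abs w.re, sq_abs (Real.sin w.re), abs_nonneg w.re, abs_nonneg (Real.sin w.re)]
  have := Complex.abs.nonneg (Complex.sin w)
  nlinarith [Complex.abs.nonneg w]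

/-- Upper bound for `|cos|` on a horizontal strip. -/
lemma abs_cos_upper {w : ℂ} (him : |w.im| ≤ 1/4) :
    Complex.abs (Complex.cos w) ≤ 2 := by
  have h1 : Complex.abs (Complex.cos w) ^ 2 ≤ 4 := by
    rw [abs_cos_sq]
    have := sinh_sq_le him
    nlinarith [Real.neg_one_le_cos w.re, Real.cos_le_one w.re, sq_abs w.im,
      abs_nonneg w.im, abs_le.mp him]
  nlinarith [Complex.abs.nonneg (Complex.cos w)]

lemma sin_concave_lower {α : ℝ} (hα0 : 0 < α) (hαπ : α < π) {a : ℝ} (ha0 : 0 ≤ a)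
    (ha : a ≤ α) : Real.sin α / α * a ≤ Real.sin a := by
  have hconc := strictConcaveOn_sin_Icc.concaveOn
  have hmem1 : α ∈ Set.Icc (0:ℝ) π := ⟨hα0.le, hαπ.le⟩
  have hmem2 : (0:ℝ) ∈ Set.Icc (0:ℝ) π := ⟨le_refl _, Real.pi_pos.le⟩
  have ht0 : 0 ≤ a / α := div_nonneg ha0 hα0.le
  have ht1 : 0 ≤ 1 - a / α := by
    have : a / α ≤ 1 := (div_le_one hα0).mpr ha
    linarith
  have h := hconc.2 hmem1 hmem2 ht0 ht1 (by ring)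
  simp only [smul_eq_mul, Real.sin_zero, mul_zero, add_zero] at h
  have heq : a / α * α = a := by field_simp
  rw [heq] at h
  have heq2 : a / α * Real.sin α = Real.sin α / α * a := by ring
  linarith [heq2 ▸ h]

/-- Lower bound for `|sin|` on a rectangle. -/
lemma abs_sin_lower {α : ℝ} (hα0 : 0 < α) (hαπ : α < π) {w : ℂ}
    (hre : |w.re| ≤ α) (him : |w.im| ≤ 1/4) :
    Real.sin α / α * Complex.abs w ≤ Complex.abs (Complex.sin w) := by
  set c := Real.sin α / α with hc
  have hsinα : 0 < Real.sin α := Real.sin_pos_of_pos_of_lt_pi hα0 hαπ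
  have hc0 : 0 < c := div_pos hsinα hα0
  have hc1 : c ≤ 1 := by
    rw [hc, div_le_one hα0]
    exact le_of_lt (Real.sin_lt hα0)
  have hlow : c * |w.re| ≤ Real.sin |w.re| := sin_concave_lower hα0 hαπ (abs_nonneg _) hre
  have hsin_nonneg : 0 ≤ Real.sin |w.re| :=
    Real.sin_nonneg_of_nonneg_of_le_pi (abs_nonneg _) (le_trans hre hαπ.le)
  have hsq : Real.sin w.re ^ 2 = Real.sin |w.re| ^ 2 := by
    rcases abs_cases w.re with ⟨h,_⟩ | ⟨h,_⟩ <;> rw [h] <;> simp [Real.sin_neg]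
  have key : (c * Complex.abs w) ^ 2 ≤ Complex.abs (Complex.sin w) ^ 2 := by
    rw [abs_sin_sq, hsq]
    have habs : Complex.abs w ^ 2 = w.re ^ 2 + w.im ^ 2 := by
      rw [Complex.sq_abs, Complex.normSq_apply]; ring
    have h1 : (c * |w.re|) ^ 2 ≤ Real.sin |w.re| ^ 2 := by
      nlinarith [mul_nonneg hc0.le (abs_nonneg w.re)]
    have h2 := sq_le_sinh_sq w.im
    have : c ^ 2 * w.im ^ 2 ≤ w.im ^ 2 := by
      nlinarith [mul_nonneg (by nlinarith : (0:ℝ) ≤ 1 - c ^ 2) (sq_nonneg w.im)]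
    nlinarith [sq_abs w.re]
  have h0 : 0 ≤ c * Complex.abs w := mul_nonneg hc0.le (Complex.abs.nonneg _)
  nlinarith [Complex.abs.nonneg (Complex.sin w)]

lemma Tsinc_lower {α : ℝ} (hα0 : 0 < α) (hαπ : α < π) {w : ℂ}
    (hre : |w.re| ≤ α) (him : |w.im| ≤ 1/4) :
    Real.sin α / α ≤ Complex.abs (Tsinc w) := by
  have hsinα : 0 < Real.sin α := Real.sin_pos_of_pos_of_lt_pi hα0 hαπ
  have hc1 : Real.sin α / α ≤ 1 := by
    rw [div_le_one hα0]; exact le_of_lt (Real.sin_lt hα0)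
  unfold Tsinc
  rcases eq_or_ne w 0 with h | h
  · simp [h, hc1]
  · rw [if_neg h, map_div₀]
    rw [le_div_iff₀ (by simpa using h : 0 < Complex.abs w)]
    exact abs_sin_lower hα0 hαπ hre him

lemma exp_taylor3 {u : ℂ} (hu : Complex.abs u ≤ 1) :
    Complex.abs (Complex.exp u - (1 + u + u ^ 2 / 2)) ≤ 2/9 * Complex.abs u ^ 3 := by
  have h := Complex.exp_bound hu (by norm_num : 0 < 3)
  have hsum : (∑ m ∈ Finset.range 3, u ^ m / m.factorial) = 1 + u + u ^ 2 / 2 := by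
    norm_num [Finset.sum_range_succ, Nat.factorial]
  rw [hsum] at h
  calc Complex.abs (Complex.exp u - (1 + u + u ^ 2 / 2))
      ≤ Complex.abs u ^ 3 * ((3 : ℕ).succ * (((3:ℕ).factorial * 3 : ℝ))⁻¹) := h
    _ = 2/9 * Complex.abs u ^ 3 := by
        norm_num [Nat.factorial]
        ring

lemma abs_neg_mul_I (w : ℂ) : Complex.abs (-w * Complex.I) = Complex.abs w := by simp
lemma abs_mul_I (w : ℂ) : Complex.abs (w * Complex.I) = Complex.abs w := by simp

/-- Cubic Taylor bound: `|sin w − w| ≤ |w|³` for `|w| ≤ 1`. -/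
lemma abs_sin_sub_self {w : ℂ} (hw : Complex.abs w ≤ 1) :
    Complex.abs (Complex.sin w - w) ≤ Complex.abs w ^ 3 := by
  set Ep := Complex.exp (w * Complex.I) - (1 + w * Complex.I + (w * Complex.I) ^ 2 / 2) with hEp
  set Em := Complex.exp (-w * Complex.I) - (1 + -w * Complex.I + (-w * Complex.I) ^ 2 / 2)
    with hEm
  have hid : Complex.sin w - w = (Em - Ep) * Complex.I / 2 := by
    rw [hEp, hEm]
    have h2s := Complex.two_sin w
    linear_combination (1/2) * h2s - w * Complex.I_sq
  have hp := exp_taylor3 (u := w * Complex.I) (by rw [abs_mul_I]; exact hw)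
  have hm := exp_taylor3 (u := -w * Complex.I) (by rw [abs_neg_mul_I]; exact hw)
  rw [abs_mul_I] at hp
  rw [abs_neg_mul_I] at hm
  rw [hid, map_div₀, map_mul, Complex.abs_I, mul_one, Complex.abs_two]
  have hEpb : Complex.abs Ep ≤ 2/9 * Complex.abs w ^ 3 := hEp ▸ hp
  have hEmb : Complex.abs Em ≤ 2/9 * Complex.abs w ^ 3 := hEm ▸ hm
  have h3 := Complex.abs.sub_le_add Em Ep
  have hw3 : (0:ℝ) ≤ Complex.abs w ^ 3 := pow_nonneg (Complex.abs.nonneg w) 3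
  linarith

/-- Cubic Taylor bound: `|w cos w − sin w| ≤ |w|³` for `|w| ≤ 1`. -/
lemma abs_cubic {w : ℂ} (hw : Complex.abs w ≤ 1) :
    Complex.abs (w * Complex.cos w - Complex.sin w) ≤ Complex.abs w ^ 3 := by
  set Ep := Complex.exp (w * Complex.I) - (1 + w * Complex.I + (w * Complex.I) ^ 2 / 2) with hEp
  set Em := Complex.exp (-w * Complex.I) - (1 + -w * Complex.I + (-w * Complex.I) ^ 2 / 2)
    with hEm
  have hid : w * Complex.cos w - Complex.sin w
      = (w * (Ep + Em) - w ^ 3 - (Em - Ep) * Complex.I) / 2 := by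
    rw [hEp, hEm]
    have h2s := Complex.two_sin w
    have h2c := Complex.two_cos w
    linear_combination (w/2) * h2c - (1/2) * h2s + (w^3/2 + w) * Complex.I_sq
  have hp := exp_taylor3 (u := w * Complex.I) (by rw [abs_mul_I]; exact hw)
  have hm := exp_taylor3 (u := -w * Complex.I) (by rw [abs_neg_mul_I]; exact hw)
  rw [abs_mul_I] at hp
  rw [abs_neg_mul_I] at hm
  rw [hid, map_div₀, Complex.abs_two]
  have hEpb : Complex.abs Ep ≤ 2/9 * Complex.abs w ^ 3 := hEp ▸ hp
  have hEmb : Complex.abs Em ≤ 2/9 * Complex.abs w ^ 3 := hEm ▸ hm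
  have hw3 : (0:ℝ) ≤ Complex.abs w ^ 3 := pow_nonneg (Complex.abs.nonneg w) 3
  have h1 : Complex.abs (w * (Ep + Em) - w ^ 3 - (Em - Ep) * Complex.I)
      ≤ Complex.abs w * (Complex.abs Ep + Complex.abs Em) + Complex.abs w ^ 3
        + (Complex.abs Em + Complex.abs Ep) := by
    calc Complex.abs (w * (Ep + Em) - w ^ 3 - (Em - Ep) * Complex.I)
        ≤ Complex.abs (w * (Ep + Em) - w ^ 3) + Complex.abs ((Em - Ep) * Complex.I) :=
          Complex.abs.sub_le_add _ _
      _ ≤ Complex.abs (w * (Ep + Em)) + Complex.abs (w ^ 3)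
            + Complex.abs ((Em - Ep) * Complex.I) := by
          linarith [Complex.abs.sub_le_add (w * (Ep + Em)) (w ^ 3)]
      _ ≤ Complex.abs w * (Complex.abs Ep + Complex.abs Em) + Complex.abs w ^ 3
            + (Complex.abs Em + Complex.abs Ep) := by
          rw [map_mul, map_mul, Complex.abs_I, mul_one, map_pow]
          have h2 := Complex.abs.add_le Ep Em
          have h3 := Complex.abs.sub_le_add Em Ep
          have h4 := Complex.abs.nonneg w
          nlinarith
  have haw : Complex.abs w * (Complex.abs Ep + Complex.abs Em)
      ≤ 1 * (2/9 * Complex.abs w ^ 3 + 2/9 * Complex.abs w ^ 3) := by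
    apply mul_le_mul hw (by linarith) (by positivity) (by norm_num)
  linarith

lemma Tsinc'_bound {w : ℂ} (him : |w.im| ≤ 1/4) :
    Complex.abs (Tsinc' w) ≤ 4 * Complex.abs w := by
  unfold Tsinc'
  rcases eq_or_ne w 0 with h | h
  · simp [h]
  have hw0 : 0 < Complex.abs w := by simpa using h
  rw [if_neg h, map_div₀, map_pow]
  rcases le_or_gt (Complex.abs w) 1 with hle | hgt
  · have := abs_cubic hle
    calc Complex.abs (w * Complex.cos w - Complex.sin w) / Complex.abs w ^ 2
        ≤ Complex.abs w ^ 3 / Complex.abs w ^ 2 := by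
          apply div_le_div_of_nonneg_right this (by positivity) |>.trans_eq rfl
      _ = Complex.abs w := by field_simp
      _ ≤ 4 * Complex.abs w := by linarith
  · have h1 : Complex.abs (w * Complex.cos w - Complex.sin w)
        ≤ 4 * Complex.abs w := by
      calc Complex.abs (w * Complex.cos w - Complex.sin w)
          ≤ Complex.abs (w * Complex.cos w) + Complex.abs (Complex.sin w) :=
            Complex.abs.sub_le_add _ _
        _ ≤ Complex.abs w * 2 + 2 * Complex.abs w := by
            rw [map_mul]
            have := abs_cos_upper him
            have := abs_sin_upper him
            nlinarith
        _ = 4 * Complex.abs w := by ring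
    calc Complex.abs (w * Complex.cos w - Complex.sin w) / Complex.abs w ^ 2
        ≤ 4 * Complex.abs w / Complex.abs w ^ 2 := by
          apply div_le_div_of_nonneg_right h1 (by positivity) |>.trans_eq rfl
      _ = 4 / Complex.abs w := by field_simp
      _ ≤ 4 * Complex.abs w := by
          rw [div_le_iff₀ hw0]
          nlinarith

lemma hasDerivAt_Tsinc (w : ℂ) : HasDerivAt Tsinc (Tsinc' w) w := by
  rcases eq_or_ne w 0 with h | h
  · subst h
    rw [hasDerivAt_iff_isLittleO]
    have : Tsinc' 0 = 0 := by simp [Tsinc']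
    rw [this]
    rw [Asymptotics.isLittleO_iff]
    intro c hc
    rw [Metric.eventually_nhds_iff]
    refine ⟨min 1 c, by positivity, fun {z} hz => ?_⟩
    simp only [dist_zero_right, Complex.norm_eq_abs] at hz
    have hz1 : Complex.abs z ≤ 1 := le_trans hz.le (min_le_left _ _)
    have hzc : Complex.abs z ≤ c := le_trans hz.le (min_le_right _ _)
    simp only [sub_zero, smul_zero, sub_zero, Complex.norm_eq_abs]
    rcases eq_or_ne z 0 with hz0 | hz0
    · simp [hz0, Tsinc]
    · have : Tsinc z - Tsinc 0 = (Complex.sin z - z) / z := by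
        simp only [Tsinc, if_neg hz0, if_pos rfl, if_true]
        field_simp
      rw [this, map_div₀]
      have h1 := abs_sin_sub_self hz1
      have hza : 0 < Complex.abs z := by simpa using hz0
      rw [div_le_iff₀ hza]
      calc Complex.abs (Complex.sin z - z) ≤ Complex.abs z ^ 3 := h1
        _ ≤ c * Complex.abs z * Complex.abs z := by
            nlinarith [mul_le_mul_of_nonneg_right hzc (sq_nonneg (Complex.abs z))]
  · have hd : HasDerivAt (fun z => Complex.sin z / z)
        ((Complex.cos w * w - Complex.sin w * 1) / w ^ 2) w :=
      (Complex.hasDerivAt_sin w).div (hasDerivAt_id w) h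
    have heq : Tsinc' w = (Complex.cos w * w - Complex.sin w * 1) / w ^ 2 := by
      rw [Tsinc', if_neg h]; ring_nf
    rw [heq]
    apply hd.congr_of_eventuallyEq
    filter_upwards [eventually_ne_nhds h] with z hz
    simp [Tsinc, if_neg hz]

/-! ### The function `g` and its derivative -/

/-- `gFun θ φ z = cos (z φ) / (θ * Tsinc (z θ))`, the analytic continuation of
`z cos (z φ) / sin (z θ)`. -/
noncomputable def gFun (θ φ : ℝ) : ℂ → ℂ := fun z =>
  Complex.cos (z * (φ : ℂ)) / ((θ : ℂ) * Tsinc (z * (θ : ℂ)))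

noncomputable def gFun' (θ φ : ℝ) : ℂ → ℂ := fun z =>
  (-Complex.sin (z * (φ : ℂ)) * (φ : ℂ) * ((θ : ℂ) * Tsinc (z * (θ : ℂ))) -
      Complex.cos (z * (φ : ℂ)) * ((θ : ℂ) * (Tsinc' (z * (θ : ℂ)) * (θ : ℂ)))) /
    ((θ : ℂ) * Tsinc (z * (θ : ℂ))) ^ 2

lemma mul_ofReal_re (z : ℂ) (r : ℝ) : (z * (r : ℂ)).re = z.re * r := by
  simp [Complex.mul_re]

lemma mul_ofReal_im (z : ℂ) (r : ℝ) : (z * (r : ℂ)).im = z.im * r := by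
  simp [Complex.mul_im]

lemma Tsinc_ne_zero {α θ : ℝ} (hα0 : 0 < α) (hαπ : α < π) (hθ : 0 < θ)
    {z : ℂ} (hre : |z.re| * θ ≤ α) (him : |z.im| * θ ≤ 1/4) :
    Tsinc (z * (θ : ℂ)) ≠ 0 := by
  have hsinα : 0 < Real.sin α := Real.sin_pos_of_pos_of_lt_pi hα0 hαπ
  have h := Tsinc_lower hα0 hαπ (w := z * (θ : ℂ))
    (by rw [mul_ofReal_re, abs_mul, abs_of_pos hθ]; exact hre)
    (by rw [mul_ofReal_im, abs_mul, abs_of_pos hθ]; exact him)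
  intro h0
  rw [h0] at h
  simp at h
  nlinarith [div_pos hsinα hα0]

lemma gFun_hasDerivAt {α θ φ : ℝ} (hα0 : 0 < α) (hαπ : α < π) (hθ : 0 < θ)
    {z : ℂ} (hre : |z.re| * θ ≤ α) (him : |z.im| * θ ≤ 1/4) :
    HasDerivAt (gFun θ φ) (gFun' θ φ z) z := by
  have hden_ne : (θ : ℂ) * Tsinc (z * (θ : ℂ)) ≠ 0 :=
    mul_ne_zero (by exact_mod_cast hθ.ne') (Tsinc_ne_zero hα0 hαπ hθ hre him)
  have h1 : HasDerivAt (fun z : ℂ => z * (φ : ℂ)) (φ : ℂ) z := by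
    simpa using (hasDerivAt_id z).mul_const (φ : ℂ)
  have hnum : HasDerivAt (fun z : ℂ => Complex.cos (z * (φ : ℂ)))
      (-Complex.sin (z * (φ : ℂ)) * (φ : ℂ)) z := by
    simpa [Function.comp_def] using (Complex.hasDerivAt_cos (z * (φ : ℂ))).comp z h1
  have h2 : HasDerivAt (fun z : ℂ => z * (θ : ℂ)) (θ : ℂ) z := by
    simpa using (hasDerivAt_id z).mul_const (θ : ℂ)
  have h3 : HasDerivAt (fun z : ℂ => Tsinc (z * (θ : ℂ)))
      (Tsinc' (z * (θ : ℂ)) * (θ : ℂ)) z := by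
    simpa [Function.comp_def] using (hasDerivAt_Tsinc (z * (θ : ℂ))).comp z h2
  have h4 : HasDerivAt (fun z : ℂ => (θ : ℂ) * Tsinc (z * (θ : ℂ)))
      ((θ : ℂ) * (Tsinc' (z * (θ : ℂ)) * (θ : ℂ))) z := h3.const_mul _
  unfold gFun gFun'
  exact hnum.div h4 hden_ne

lemma gFun'_bound {α θ φ : ℝ} (hα0 : 0 < α) (hαπ : α < π) (hθ : 0 < θ)
    (hφ0 : 0 ≤ φ) (hφθ : φ ≤ θ)
    {z : ℂ} (hre : |z.re| * θ ≤ α) (him : |z.im| * θ ≤ 1/4) :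
    Complex.abs (gFun' θ φ z) ≤ 10 * (α / Real.sin α) ^ 2 * (θ * Complex.abs z) := by
  have hsinα : 0 < Real.sin α := Real.sin_pos_of_pos_of_lt_pi hα0 hαπ
  set c := Real.sin α / α with hc
  have hc0 : 0 < c := div_pos hsinα hα0
  have hc1 : c ≤ 1 := by
    rw [hc, div_le_one hα0]; exact le_of_lt (Real.sin_lt hα0)
  set w := z * (θ : ℂ) with hw
  set v := z * (φ : ℂ) with hv
  set Z := Complex.abs z with hZ
  have hZ0 : 0 ≤ Z := Complex.abs.nonneg z
  have hwre : |w.re| ≤ α := by rw [hw, mul_ofReal_re, abs_mul, abs_of_pos hθ]; exact hre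
  have hwim : |w.im| ≤ 1/4 := by rw [hw, mul_ofReal_im, abs_mul, abs_of_pos hθ]; exact him
  have hvim : |v.im| ≤ 1/4 := by
    rw [hv, mul_ofReal_im, abs_mul, abs_of_nonneg hφ0]
    calc |z.im| * φ ≤ |z.im| * θ := by
          exact mul_le_mul_of_nonneg_left hφθ (abs_nonneg _)
      _ ≤ 1/4 := him
  set t := Complex.abs (Tsinc w) with htdef
  clear_value t
  have htc : c ≤ t := by rw [htdef, hc]; exact Tsinc_lower hα0 hαπ hwre hwim
  have ht0 : 0 < t := lt_of_lt_of_le hc0 htc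
  have habsw : Complex.abs w = Z * θ := by
    rw [hw, map_mul, Complex.abs_ofReal, abs_of_pos hθ]
  have habsv : Complex.abs v = Z * φ := by
    rw [hv, map_mul, Complex.abs_ofReal, abs_of_nonneg hφ0]
  have habs_den : Complex.abs ((θ : ℂ) * Tsinc w) = θ * t := by
    rw [map_mul, Complex.abs_ofReal, abs_of_pos hθ, ← htdef]
  -- numerator bound
  have hsinv : Complex.abs (Complex.sin v) ≤ 2 * (Z * φ) := by
    rw [← habsv]; exact abs_sin_upper hvim
  have hcosv : Complex.abs (Complex.cos v) ≤ 2 := abs_cos_upper hvim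
  have hT'w : Complex.abs (Tsinc' w) ≤ 4 * (Z * θ) := by
    rw [← habsw]; exact Tsinc'_bound hwim
  have hnum : Complex.abs (-Complex.sin v * (φ : ℂ) * ((θ : ℂ) * Tsinc w) -
      Complex.cos v * ((θ : ℂ) * (Tsinc' w * (θ : ℂ))))
      ≤ 2 * Z * φ^2 * θ * t + 8 * Z * θ^3 := by
    calc Complex.abs (-Complex.sin v * (φ : ℂ) * ((θ : ℂ) * Tsinc w) -
        Complex.cos v * ((θ : ℂ) * (Tsinc' w * (θ : ℂ))))
        ≤ Complex.abs (-Complex.sin v * (φ : ℂ) * ((θ : ℂ) * Tsinc w)) +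
          Complex.abs (Complex.cos v * ((θ : ℂ) * (Tsinc' w * (θ : ℂ)))) :=
          Complex.abs.sub_le_add _ _
      _ ≤ (2 * (Z * φ)) * φ * (θ * t) + 2 * (θ * ((4 * (Z * θ)) * θ)) := by
          simp only [map_mul, map_neg_eq_map, Complex.abs_ofReal,
            abs_of_nonneg hφ0, abs_of_pos hθ]
          rw [← htdef]
          have h5 : Complex.abs (Complex.sin v) * φ * (θ * t)
              ≤ (2 * (Z * φ)) * φ * (θ * t) := by
            apply mul_le_mul_of_nonneg_right _ (by positivity)
            exact mul_le_mul_of_nonneg_right hsinv hφ0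
          have h6 : Complex.abs (Complex.cos v) * (θ * (Complex.abs (Tsinc' w) * θ))
              ≤ 2 * (θ * ((4 * (Z * θ)) * θ)) := by
            apply mul_le_mul hcosv _ (by positivity) (by norm_num)
            apply mul_le_mul_of_nonneg_left _ hθ.le
            exact mul_le_mul_of_nonneg_right hT'w hθ.le
          exact add_le_add h5 h6
      _ = 2 * Z * φ^2 * θ * t + 8 * Z * θ^3 := by ring
  -- put together
  have hgoal : Complex.abs (gFun' θ φ z)
      = Complex.abs (-Complex.sin v * (φ : ℂ) * ((θ : ℂ) * Tsinc w) -
        Complex.cos v * ((θ : ℂ) * (Tsinc' w * (θ : ℂ)))) / (θ * t)^2 := by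
    simp only [gFun', ← hv, ← hw]
    rw [map_div₀, map_pow, habs_den]
  rw [hgoal]
  rw [div_le_iff₀ (by positivity)]
  have hratio : (α / Real.sin α) = 1 / c := by
    rw [hc]; field_simp
  rw [hratio]
  have hkey : c^2 * (2 * Z * φ^2 * θ * t + 8 * Z * θ^3) ≤ 10 * (θ * Z) * (θ * t)^2 := by
    have h1 : φ^2 ≤ θ^2 := by nlinarith
    have h2 : c^2 ≤ t^2 := by nlinarith
    have h3 : c^2 * t ≤ t^2 := by
      nlinarith [mul_nonneg (le_trans hc0.le htc) (sub_nonneg.mpr htc)]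
    have e1 : c^2 * (2 * Z * φ^2 * θ * t) ≤ 2 * Z * θ^3 * t^2 := by
      calc c^2 * (2 * Z * φ^2 * θ * t) ≤ c^2 * (2 * Z * θ^2 * θ * t) := by
            apply mul_le_mul_of_nonneg_left _ (sq_nonneg c)
            have : (0:ℝ) ≤ 2 * Z * θ * t := by positivity
            nlinarith
        _ = 2 * Z * θ^3 * (c^2 * t) := by ring
        _ ≤ 2 * Z * θ^3 * t^2 := by
            apply mul_le_mul_of_nonneg_left h3 (by positivity)
    have e2 : c^2 * (8 * Z * θ^3) ≤ 8 * Z * θ^3 * t^2 := by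
      calc c^2 * (8 * Z * θ^3) = 8 * Z * θ^3 * c^2 := by ring
        _ ≤ 8 * Z * θ^3 * t^2 := mul_le_mul_of_nonneg_left h2 (by positivity)
    calc c^2 * (2 * Z * φ^2 * θ * t + 8 * Z * θ^3)
        = c^2 * (2 * Z * φ^2 * θ * t) + c^2 * (8 * Z * θ^3) := by ring
      _ ≤ 2 * Z * θ^3 * t^2 + 8 * Z * θ^3 * t^2 := add_le_add e1 e2
      _ = 10 * (θ * Z) * (θ * t)^2 := by ring
  calc Complex.abs (-Complex.sin v * (φ : ℂ) * ((θ : ℂ) * Tsinc w) -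
        Complex.cos v * ((θ : ℂ) * (Tsinc' w * (θ : ℂ))))
      ≤ 2 * Z * φ^2 * θ * t + 8 * Z * θ^3 := hnum
    _ ≤ 10 * (θ * Z) * (θ * t)^2 / c^2 := by
        rw [le_div_iff₀ (by positivity)]
        nlinarith [hkey]
    _ = 10 * (1/c)^2 * (θ * Z) * (θ * t)^2 := by
        field_simp

/-- Estimate (C.3): for `Re λ ∈ I_ε`, `|Im λ|θ < 1/4`, `|λ−1| ≥ 1/4`, `|λ+1| ≥ 1/4`,
the difference of the two cosine quotients is bounded by `Cθ`. -/
theorem cosine_quotient_cancellation (ε : ℝ) (hε : ε ∈ Set.Ioo (0:ℝ) 1) :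
    ∃ C : ℝ, 0 < C ∧ ∀ θ : ℝ, 0 < θ → ∀ lam : ℂ, ∀ φ : ℝ,
      1 - (1 - ε) * π / θ ≤ lam.re → lam.re ≤ (1 - ε) * π / θ - 1 →
      |lam.im| * θ < 1/4 →
      1/4 ≤ ‖lam - 1‖ → 1/4 ≤ ‖lam + 1‖ →
      φ ∈ Set.Ioo (0:ℝ) θ →
      ‖(lam + 1) * Complex.cos ((lam + 1) * (φ : ℂ))
            / (4 * lam * Complex.sin ((lam + 1) * θ))
          - (lam - 1) * Complex.cos ((lam - 1) * (φ : ℂ))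
            / (4 * lam * Complex.sin ((lam - 1) * θ))‖
        ≤ C * θ := by
  obtain ⟨hε0, hε1⟩ := hε
  set α := (1 - ε) * π with hα
  have hα0 : 0 < α := by
    have := Real.pi_pos
    rw [hα]; nlinarith
  have hαπ : α < π := by
    have := Real.pi_pos
    rw [hα]; nlinarith
  have hsinα : 0 < Real.sin α := Real.sin_pos_of_pos_of_lt_pi hα0 hαπ
  set K := 10 * (α / Real.sin α) ^ 2 with hK
  have hK0 : 0 < K := by
    rw [hK]
    exact mul_pos (by norm_num) (pow_pos (div_pos hα0 hsinα) 2)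
  refine ⟨2 * K, by linarith, ?_⟩
  intro θ hθ lam φ h1 h2 him habs1 habs2 hφ
  simp only [Complex.norm_eq_abs] at habs1 habs2 ⊢
  obtain ⟨hφ0, hφθ⟩ := hφ
  -- basic bounds
  have hreb : (|lam.re| + 1) * θ ≤ α := by
    have hre : |lam.re| ≤ α / θ - 1 := abs_le.mpr ⟨by linarith, by linarith⟩
    rw [← le_div_iff₀ hθ]
    linarith
  have himθ : |lam.im| * θ ≤ 1/4 := him.le
  rcases eq_or_ne lam 0 with hlam0 | hlam0
  · subst hlam0
    simp only [mul_zero, zero_mul, mul_comm]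
    norm_num
    positivity
  -- nonvanishing facts
  have hlamp : lam + 1 ≠ 0 := by
    intro h
    rw [h] at habs2
    simp at habs2
    linarith
  have hlamm : lam - 1 ≠ 0 := by
    intro h
    rw [h] at habs1
    simp at habs1
    linarith
  have hθC : (θ : ℂ) ≠ 0 := by exact_mod_cast hθ.ne'
  have hrep : |(lam + 1).re| * θ ≤ α := by
    rw [Complex.add_re, Complex.one_re]
    calc |lam.re + 1| * θ ≤ (|lam.re| + 1) * θ := by
          apply mul_le_mul_of_nonneg_right (by simpa using abs_add_le lam.re 1) hθ.le
      _ ≤ α := hreb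
  have hrem : |(lam - 1).re| * θ ≤ α := by
    rw [Complex.sub_re, Complex.one_re]
    have : |lam.re - 1| ≤ |lam.re| + 1 := by simpa using abs_sub lam.re 1
    calc |lam.re - 1| * θ ≤ (|lam.re| + 1) * θ := by
          apply mul_le_mul_of_nonneg_right this hθ.le
      _ ≤ α := hreb
  have himp : |(lam + 1).im| * θ ≤ 1/4 := by
    rw [Complex.add_im, Complex.one_im, add_zero]; exact himθ
  have himm : |(lam - 1).im| * θ ≤ 1/4 := by
    rw [Complex.sub_im, Complex.one_im, sub_zero]; exact himθ
  have hTp := Tsinc_ne_zero hα0 hαπ hθ hrep himp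
  have hTm := Tsinc_ne_zero hα0 hαπ hθ hrem himm
  -- rewrite the two quotients
  have hrw1 : (lam + 1) * Complex.cos ((lam + 1) * (φ : ℂ))
      / (4 * lam * Complex.sin ((lam + 1) * (θ : ℂ)))
      = gFun θ φ (lam + 1) / (4 * lam) := by
    rw [sin_eq_mul_Tsinc ((lam + 1) * (θ : ℂ))]
    simp only [gFun]
    field_simp
  have hrw2 : (lam - 1) * Complex.cos ((lam - 1) * (φ : ℂ))
      / (4 * lam * Complex.sin ((lam - 1) * (θ : ℂ)))
      = gFun θ φ (lam - 1) / (4 * lam) := by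
    rw [sin_eq_mul_Tsinc ((lam - 1) * (θ : ℂ))]
    simp only [gFun]
    field_simp
  rw [hrw1, hrw2, div_sub_div_same, map_div₀]
  have habs4 : Complex.abs (4 * lam) = 4 * Complex.abs lam := by
    rw [map_mul]
    norm_num
  rw [habs4]
  have hlamA : 0 < Complex.abs lam := by simpa using hlam0
  rw [div_le_iff₀ (by positivity)]
  -- it remains to bound |g(lam+1) - g(lam-1)|
  rcases le_or_gt (1/2) (Complex.abs lam) with hbig | hsmall
  · -- case |lam| ≥ 1/2 : mean value on segment from lam-1 to lam+1
    set s : Set ℂ := {z : ℂ | (|z.re| * θ ≤ α ∧ |z.im| * θ ≤ 1/4) ∧ Complex.abs (z - lam) ≤ 1}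
      with hs
    have hconv : Convex ℝ s := by
      intro x hx y hy a b ha hb hab
      obtain ⟨⟨hx1, hx2⟩, hx3⟩ := hx
      obtain ⟨⟨hy1, hy2⟩, hy3⟩ := hy
      have hre' : (a • x + b • y).re = a * x.re + b * y.re := by
        simp [Complex.add_re, Complex.smul_re]
      have him' : (a • x + b • y).im = a * x.im + b * y.im := by
        simp [Complex.add_im, Complex.smul_im]
      refine ⟨⟨?_, ?_⟩, ?_⟩
      · rw [hre']
        calc |a * x.re + b * y.re| * θ ≤ (a * |x.re| + b * |y.re|) * θ := by
              apply mul_le_mul_of_nonneg_right _ hθ.le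
              calc |a * x.re + b * y.re| ≤ |a * x.re| + |b * y.re| := abs_add_le _ _
                _ = a * |x.re| + b * |y.re| := by
                    rw [abs_mul, abs_mul, abs_of_nonneg ha, abs_of_nonneg hb]
          _ = a * (|x.re| * θ) + b * (|y.re| * θ) := by ring
          _ ≤ a * α + b * α := by
              apply add_le_add (mul_le_mul_of_nonneg_left hx1 ha)
                (mul_le_mul_of_nonneg_left hy1 hb)
          _ = α := by rw [← add_mul, hab, one_mul]
      · rw [him']
        calc |a * x.im + b * y.im| * θ ≤ (a * |x.im| + b * |y.im|) * θ := by
              apply mul_le_mul_of_nonneg_right _ hθ.le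
              calc |a * x.im + b * y.im| ≤ |a * x.im| + |b * y.im| := abs_add_le _ _
                _ = a * |x.im| + b * |y.im| := by
                    rw [abs_mul, abs_mul, abs_of_nonneg ha, abs_of_nonneg hb]
          _ = a * (|x.im| * θ) + b * (|y.im| * θ) := by ring
          _ ≤ a * (1/4) + b * (1/4) := by
              apply add_le_add (mul_le_mul_of_nonneg_left hx2 ha)
                (mul_le_mul_of_nonneg_left hy2 hb)
          _ = 1/4 := by linarith [hab]
      · have hab' : (a : ℂ) + (b : ℂ) = 1 := by
          rw [← Complex.ofReal_add, hab, Complex.ofReal_one]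
        have hsplit : a • x + b • y - lam = a • (x - lam) + b • (y - lam) := by
          simp only [Complex.real_smul]
          linear_combination lam * hab'
        rw [hsplit]
        calc Complex.abs (a • (x - lam) + b • (y - lam))
            ≤ Complex.abs (a • (x - lam)) + Complex.abs (b • (y - lam)) :=
              Complex.abs.add_le _ _
          _ = a * Complex.abs (x - lam) + b * Complex.abs (y - lam) := by
              simp only [Complex.real_smul, map_mul, Complex.abs_ofReal,
                abs_of_nonneg ha, abs_of_nonneg hb]
          _ ≤ a * 1 + b * 1 := by
              apply add_le_add (mul_le_mul_of_nonneg_left hx3 ha)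
                (mul_le_mul_of_nonneg_left hy3 hb)
          _ = 1 := by linarith [hab]
    have hmemp : lam + 1 ∈ s := by
      refine ⟨⟨hrep, himp⟩, ?_⟩
      simp
    have hmemm : lam - 1 ∈ s := by
      refine ⟨⟨hrem, himm⟩, ?_⟩
      simp
    have hder : ∀ z ∈ s, HasDerivWithinAt (gFun θ φ) (gFun' θ φ z) s z := fun z hz =>
      (gFun_hasDerivAt hα0 hαπ hθ hz.1.1 hz.1.2).hasDerivWithinAt
    have hbound : ∀ z ∈ s, ‖gFun' θ φ z‖ ≤ K * (θ * (Complex.abs lam + 1)) := by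
      intro z hz
      rw [Complex.norm_eq_abs]
      calc Complex.abs (gFun' θ φ z) ≤ K * (θ * Complex.abs z) :=
            gFun'_bound hα0 hαπ hθ hφ0.le hφθ.le hz.1.1 hz.1.2
        _ ≤ K * (θ * (Complex.abs lam + 1)) := by
            apply mul_le_mul_of_nonneg_left _ hK0.le
            apply mul_le_mul_of_nonneg_left _ hθ.le
            calc Complex.abs z = Complex.abs (z - lam + lam) := by ring_nf
              _ ≤ Complex.abs (z - lam) + Complex.abs lam := Complex.abs.add_le _ _
              _ ≤ Complex.abs lam + 1 := by linarith [hz.2]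
    have hmvt := hconv.norm_image_sub_le_of_norm_hasDerivWithin_le hder hbound hmemm hmemp
    have hd2 : ‖(lam + 1) - (lam - 1)‖ = 2 := by
      have : (lam + 1) - (lam - 1) = 2 := by ring
      rw [this]
      simp
    rw [hd2, Complex.norm_eq_abs] at hmvt
    calc Complex.abs (gFun θ φ (lam + 1) - gFun θ φ (lam - 1))
        ≤ K * (θ * (Complex.abs lam + 1)) * 2 := hmvt
      _ ≤ 2 * K * θ * (4 * Complex.abs lam) := by
          nlinarith [mul_nonneg (mul_pos hK0 hθ).le
            (by linarith : (0:ℝ) ≤ 6 * Complex.abs lam - 2)]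
  · -- case |lam| < 1/2 : use oddness, mean value from 0 to lam
    set s : Set ℂ := {z : ℂ | |z.re| ≤ |lam.re| ∧ |z.im| ≤ |lam.im|} with hs
    have hconv : Convex ℝ s := by
      intro x hx y hy a b ha hb hab
      obtain ⟨hx1, hx2⟩ := hx
      obtain ⟨hy1, hy2⟩ := hy
      have hre' : (a • x + b • y).re = a * x.re + b * y.re := by
        simp [Complex.add_re, Complex.smul_re]
      have him' : (a • x + b • y).im = a * x.im + b * y.im := by
        simp [Complex.add_im, Complex.smul_im]
      constructor
      · rw [hre']
        calc |a * x.re + b * y.re| ≤ |a * x.re| + |b * y.re| := abs_add_le _ _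
          _ = a * |x.re| + b * |y.re| := by
              rw [abs_mul, abs_mul, abs_of_nonneg ha, abs_of_nonneg hb]
          _ ≤ a * |lam.re| + b * |lam.re| := by
              apply add_le_add (mul_le_mul_of_nonneg_left hx1 ha)
                (mul_le_mul_of_nonneg_left hy1 hb)
          _ = |lam.re| := by rw [← add_mul, hab, one_mul]
      · rw [him']
        calc |a * x.im + b * y.im| ≤ |a * x.im| + |b * y.im| := abs_add_le _ _
          _ = a * |x.im| + b * |y.im| := by
              rw [abs_mul, abs_mul, abs_of_nonneg ha, abs_of_nonneg hb]
          _ ≤ a * |lam.im| + b * |lam.im| := by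
              apply add_le_add (mul_le_mul_of_nonneg_left hx2 ha)
                (mul_le_mul_of_nonneg_left hy2 hb)
          _ = |lam.im| := by rw [← add_mul, hab, one_mul]
    have hstrip : ∀ z ∈ s, (|(z+1).re| * θ ≤ α ∧ |(z+1).im| * θ ≤ 1/4)
        ∧ (|(z-1).re| * θ ≤ α ∧ |(z-1).im| * θ ≤ 1/4) := by
      intro z hz
      obtain ⟨hz1, hz2⟩ := hz
      have himz : |z.im| * θ ≤ 1/4 := le_trans
        (mul_le_mul_of_nonneg_right hz2 hθ.le) himθ
      refine ⟨⟨?_, ?_⟩, ⟨?_, ?_⟩⟩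
      · rw [Complex.add_re, Complex.one_re]
        calc |z.re + 1| * θ ≤ (|lam.re| + 1) * θ := by
              apply mul_le_mul_of_nonneg_right _ hθ.le
              calc |z.re + 1| ≤ |z.re| + 1 := by simpa using abs_add_le z.re 1
                _ ≤ |lam.re| + 1 := by linarith
          _ ≤ α := hreb
      · rw [Complex.add_im, Complex.one_im, add_zero]; exact himz
      · rw [Complex.sub_re, Complex.one_re]
        calc |z.re - 1| * θ ≤ (|lam.re| + 1) * θ := by
              apply mul_le_mul_of_nonneg_right _ hθ.le
              calc |z.re - 1| ≤ |z.re| + 1 := by simpa using abs_sub z.re 1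
                _ ≤ |lam.re| + 1 := by linarith
          _ ≤ α := hreb
      · rw [Complex.sub_im, Complex.one_im, sub_zero]; exact himz
    have hder : ∀ z ∈ s, HasDerivWithinAt
        (fun z => gFun θ φ (z + 1) - gFun θ φ (z - 1))
        (gFun' θ φ (z + 1) - gFun' θ φ (z - 1)) s z := by
      intro z hz
      obtain ⟨⟨ha1, ha2⟩, ⟨hb1, hb2⟩⟩ := hstrip z hz
      have hp : HasDerivAt (fun z : ℂ => gFun θ φ (z + 1)) (gFun' θ φ (z + 1)) z := by
        have hshift : HasDerivAt (fun z : ℂ => z + 1) 1 z := (hasDerivAt_id z).add_const 1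
        simpa [Function.comp_def] using
          (gFun_hasDerivAt (φ := φ) hα0 hαπ hθ ha1 ha2).comp z hshift
      have hm : HasDerivAt (fun z : ℂ => gFun θ φ (z - 1)) (gFun' θ φ (z - 1)) z := by
        have hshift : HasDerivAt (fun z : ℂ => z - 1) 1 z := (hasDerivAt_id z).sub_const 1
        simpa [Function.comp_def] using
          (gFun_hasDerivAt (φ := φ) hα0 hαπ hθ hb1 hb2).comp z hshift
      exact (hp.sub hm).hasDerivWithinAt
    have hbound : ∀ z ∈ s, ‖gFun' θ φ (z + 1) - gFun' θ φ (z - 1)‖ ≤ K * θ * 4 := by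
      intro z hz
      obtain ⟨⟨ha1, ha2⟩, ⟨hb1, hb2⟩⟩ := hstrip z hz
      have hzabs : Complex.abs z ≤ 1 := by
        calc Complex.abs z ≤ |z.re| + |z.im| := Complex.abs_le_abs_re_add_abs_im z
          _ ≤ |lam.re| + |lam.im| := add_le_add hz.1 hz.2
          _ ≤ Complex.abs lam + Complex.abs lam :=
              add_le_add (Complex.abs_re_le_abs lam) (Complex.abs_im_le_abs lam)
          _ ≤ 1 := by linarith
      have hzp : Complex.abs (z + 1) ≤ 2 := by
        calc Complex.abs (z + 1) ≤ Complex.abs z + Complex.abs 1 := Complex.abs.add_le _ _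
          _ ≤ 2 := by simp at hzabs ⊢; linarith
      have hzm : Complex.abs (z - 1) ≤ 2 := by
        calc Complex.abs (z - 1) ≤ Complex.abs z + Complex.abs 1 := Complex.abs.sub_le_add _ _
          _ ≤ 2 := by simp at hzabs ⊢; linarith
      rw [Complex.norm_eq_abs]
      calc Complex.abs (gFun' θ φ (z + 1) - gFun' θ φ (z - 1))
          ≤ Complex.abs (gFun' θ φ (z + 1)) + Complex.abs (gFun' θ φ (z - 1)) :=
            Complex.abs.sub_le_add _ _
        _ ≤ K * (θ * Complex.abs (z + 1)) + K * (θ * Complex.abs (z - 1)) :=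
            add_le_add (gFun'_bound hα0 hαπ hθ hφ0.le hφθ.le ha1 ha2)
              (gFun'_bound hα0 hαπ hθ hφ0.le hφθ.le hb1 hb2)
        _ ≤ K * (θ * 2) + K * (θ * 2) := by
            apply add_le_add <;> apply mul_le_mul_of_nonneg_left _ hK0.le
            · exact mul_le_mul_of_nonneg_left hzp hθ.le
            · exact mul_le_mul_of_nonneg_left hzm hθ.le
        _ = K * θ * 4 := by ring
    have hmem0 : (0 : ℂ) ∈ s := by
      constructor <;> simp
    have hmeml : lam ∈ s := ⟨le_refl _, le_refl _⟩
    have hmvt := hconv.norm_image_sub_le_of_norm_hasDerivWithin_le hder hbound hmem0 hmeml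
    have hH0 : gFun θ φ ((0:ℂ) + 1) - gFun θ φ ((0:ℂ) - 1) = 0 := by
      have h1 : ((0:ℂ) + 1) = 1 := by ring
      have h2 : ((0:ℂ) - 1) = -1 := by ring
      rw [h1, h2]
      have : gFun θ φ (-1) = gFun θ φ 1 := by
        simp only [gFun]
        rw [show ((-1:ℂ) * (φ:ℂ)) = -(1 * (φ:ℂ)) by ring,
          show ((-1:ℂ) * (θ:ℂ)) = -(1 * (θ:ℂ)) by ring, Complex.cos_neg, Tsinc_even]
      rw [this, sub_self]
    rw [hH0, sub_zero, sub_zero, Complex.norm_eq_abs, Complex.norm_eq_abs] at hmvt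
    calc Complex.abs (gFun θ φ (lam + 1) - gFun θ φ (lam - 1))
        ≤ K * θ * 4 * Complex.abs lam := hmvt
      _ ≤ 2 * K * θ * (4 * Complex.abs lam) := by
          nlinarith [mul_nonneg (mul_nonneg hK0.le hθ.le) hlamA.le]
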